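/- (Reflection principle for lightlike lines, analytic form.) Let σ < 0 < τ be real numbers, a, b ∈ ℝ³, and let X̂ : ℝ → ℝ³ be a bounded measurable map with X̂ = a almost everywhere on (σ,0) and X̂ = b almost everywhere on (0,τ). Let X : ℍ → ℝ³ be the componentwise Poisson integral X(ζ) = P_{X̂}(ζ). Then there exists a map F : ℝ × (0,π) → ℝ³, real analytic on the open set ℝ × (0,π) ⊂ ℝ², such that: (i) F(r,θ) = X(r·e^{iθ}) for all r > 0 and θ ∈ (0,π); (ii) F(−r, π−θ) + F(r,θ) = a + b for all r ∈ ℝ and θ ∈ (0,π) (point symmetry with respect to the midpoint (a+b)/2); and (iii) F(0,θ) = (θ/π)·a + (1 − θ/π)·b for all θ ∈ (0,π). -/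

import Mathlib

/-- The Poisson integral for the upper half plane. -/
noncomputable def poisson (U : ℝ → ℝ) (ζ : ℂ) : ℝ :=
  (1 / Real.pi) * ∫ s : ℝ, (ζ.im / ((ζ.re - s) ^ 2 + ζ.im ^ 2)) * U s

open Complex MeasureTheory Real Set

noncomputable def rplPhi (ζ : ℂ) (s : ℝ) : ℂ := ((s:ℂ) - ζ)⁻¹ - (s:ℂ) / ((s:ℂ)^2 + 1)

lemma rpl_sq_add_one_ne (s : ℝ) : ((s:ℂ)^2 + 1) ≠ 0 := by
  have h : ((s:ℂ)^2 + 1) = (((s^2+1 : ℝ)) : ℂ) := by push_cast; ring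
  rw [h]
  exact_mod_cast (by positivity : (s^2+1:ℝ) ≠ 0)

lemma rplPhi_eq {ζ : ℂ} {s : ℝ} (h : (s:ℂ) ≠ ζ) :
    rplPhi ζ s = (1 + (s:ℂ)*ζ)/(((s:ℂ) - ζ)*((s:ℂ)^2+1)) := by
  have h1 : ((s:ℂ) - ζ) ≠ 0 := sub_ne_zero.2 h
  unfold rplPhi
  field_simp [rpl_sq_add_one_ne s]
  ring

lemma rpl_norm_sq_add_one (s : ℝ) : ‖(s:ℂ)^2 + 1‖ = 1 + s^2 := by
  have h : ((s:ℂ)^2 + 1) = (((s^2+1 : ℝ)) : ℂ) := by push_cast; ring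
  rw [h, Complex.norm_real, Real.norm_eq_abs, abs_of_pos (by positivity)]
  ring

lemma rpl_norm_Phi_le {ζ : ℂ} {m : ℝ} (hm : 0 < m) {s : ℝ} (hs : m ≤ ‖(s:ℂ) - ζ‖) :
    ‖rplPhi ζ s‖ ≤ ((1 + (2*‖ζ‖ + 1) * ‖ζ‖)/m + 2*(1 + ‖ζ‖)) * (1+s^2)⁻¹ := by
  set c := ‖ζ‖ with hc
  set A := ‖(s:ℂ) - ζ‖ with hA
  have hc0 : 0 ≤ c := norm_nonneg ζ
  have hA0 : 0 < A := lt_of_lt_of_le hm hs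
  have hT1 : (0:ℝ) ≤ 1 + (2*c+1)*c := by positivity
  have hne : (s:ℂ) ≠ ζ := by
    intro h; rw [hA, h, sub_self] at hA0; simp at hA0
  have hnum : ‖1 + (s:ℂ)*ζ‖ ≤ 1 + |s| * c := by
    calc ‖1 + (s:ℂ)*ζ‖ ≤ ‖1‖ + ‖(s:ℂ)*ζ‖ := norm_add_le _ _
    _ = 1 + |s| * c := by rw [norm_one, norm_mul, Complex.norm_real, Real.norm_eq_abs]
  have hKey : 1 + |s| * c ≤ ((1 + (2*c + 1) * c)/m + 2*(1 + c)) * A := by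
    rw [add_mul]
    have e1 : (1 + (2*c+1)*c)/m * m ≤ (1 + (2*c+1)*c)/m * A :=
      mul_le_mul_of_nonneg_left hs (div_nonneg hT1 hm.le)
    rw [div_mul_cancel₀ _ (ne_of_gt hm)] at e1
    rcases le_or_gt |s| (2*c+1) with h2 | h2
    · have e2 : (0:ℝ) ≤ 2*(1+c) * A := by positivity
      nlinarith [mul_le_mul_of_nonneg_right h2 hc0]
    · have h3 : |s| - c ≤ A := by
        have := norm_sub_norm_le ((s:ℂ)) ζ
        simpa using this
      have e2 : 2*(1+c)*(|s|-c) ≤ 2*(1+c)*A := by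
        apply mul_le_mul_of_nonneg_left h3 (by positivity)
      have e3 : 0 ≤ (1 + (2*c+1)*c)/m * A := mul_nonneg (div_nonneg hT1 hm.le) hA0.le
      nlinarith [mul_le_mul_of_nonneg_left h2.le hc0]
  rw [rplPhi_eq hne]
  have hden : ‖((s:ℂ) - ζ)*((s:ℂ)^2+1)‖ = A * (1 + s^2) := by
    rw [norm_mul, rpl_norm_sq_add_one]
  rw [norm_div, hden]
  rw [div_le_iff₀ (by positivity)]
  calc ‖1 + (s:ℂ)*ζ‖ ≤ ((1 + (2*c + 1) * c)/m + 2*(1 + c)) * A := le_trans hnum hKey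
  _ = ((1 + (2*c + 1) * c)/m + 2*(1 + c)) * (1+s^2)⁻¹ * (A * (1 + s^2)) := by
      field_simp

lemma rpl_norm_deriv_le {z : ℂ} {m c : ℝ} (hm : 0 < m) (hzc : ‖z‖ ≤ c) {s : ℝ}
    (hs : m ≤ ‖(s:ℂ) - z‖) :
    ‖(((s:ℂ) - z)^2)⁻¹‖ ≤ ((1 + (2*c+1)^2)/m^2 + 8) * (1+s^2)⁻¹ := by
  set A := ‖(s:ℂ) - z‖ with hA
  have hA0 : 0 < A := lt_of_lt_of_le hm hs
  have hc0 : 0 ≤ c := le_trans (norm_nonneg z) hzc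
  have hKey : 1 + s^2 ≤ ((1 + (2*c+1)^2)/m^2 + 8) * A^2 := by
    rw [add_mul]
    have e1 : (1 + (2*c+1)^2)/m^2 * m^2 ≤ (1 + (2*c+1)^2)/m^2 * A^2 := by
      apply mul_le_mul_of_nonneg_left _ (by positivity)
      nlinarith
    rw [div_mul_cancel₀ _ (by positivity : (m^2:ℝ) ≠ 0)] at e1
    rcases le_or_gt |s| (2*c+1) with h2 | h2
    · have habs : |s|^2 = s^2 := sq_abs s
      nlinarith [mul_le_mul_of_nonneg_right h2 (abs_nonneg s), sq_nonneg A, mul_nonneg (mul_nonneg (by norm_num : (0:ℝ) ≤ 8) hA0.le) hA0.le]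
    · have h3 : |s| - c ≤ A := by
        have h := norm_sub_norm_le ((s:ℂ)) z
        simp only [Complex.norm_real, Real.norm_eq_abs, ← hA] at h
        linarith
      have h4 : 0 ≤ |s| - c := by nlinarith
      have e2 : (|s| - c)^2 ≤ A^2 := by nlinarith
      have e3 : 0 ≤ (1 + (2*c+1)^2)/m^2 * A^2 := by positivity
      have habs : |s|^2 = s^2 := sq_abs s
      nlinarith [abs_nonneg s]
  have hnorm : ‖(((s:ℂ) - z)^2)⁻¹‖ = (A^2)⁻¹ := by
    rw [norm_inv, norm_pow]
  rw [hnorm, inv_eq_one_div, show ((1 + (2*c+1)^2)/m^2 + 8) * (1+s^2)⁻¹ = ((1 + (2*c+1)^2)/m^2 + 8) / (1+s^2) by ring,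
    div_le_div_iff₀ (by positivity) (by positivity)]
  nlinarith

lemma rpl_meas {g : ℝ → ℝ} (hg : Measurable g) (ζ : ℂ) :
    Measurable (fun s : ℝ => rplPhi ζ s * ((g s : ℝ) : ℂ)) := by
  apply Measurable.mul _ (Complex.measurable_ofReal.comp hg)
  unfold rplPhi
  fun_prop

lemma rpl_integrableOn {ζ : ℂ} {m : ℝ} (hm : 0 < m) {S : Set ℝ} (hSm : MeasurableSet S)
    (hS : ∀ s ∈ S, m ≤ ‖(s:ℂ) - ζ‖) {g : ℝ → ℝ} (hg : Measurable g)
    {C : ℝ} (hgC : ∀ s, |g s| ≤ C) :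
    IntegrableOn (fun s => rplPhi ζ s * ((g s : ℝ) : ℂ)) S := by
  have hC0 : 0 ≤ C := le_trans (abs_nonneg _) (hgC 0)
  set K : ℝ := (1 + (2*‖ζ‖ + 1) * ‖ζ‖)/m + 2*(1 + ‖ζ‖) with hK
  have hK0 : 0 ≤ K := by positivity
  apply Integrable.mono' (g := fun s => (K * C) * (1+s^2)⁻¹)
  · exact (((integrable_inv_one_add_sq.const_mul (K * C))).restrict (s := S))
  · exact ((rpl_meas hg ζ).aestronglyMeasurable).restrict
  · rw [ae_restrict_iff' hSm]
    refine ae_of_all _ fun s hs => ?_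
    rw [norm_mul]
    calc ‖rplPhi ζ s‖ * ‖((g s : ℝ) : ℂ)‖
        ≤ (K * (1+s^2)⁻¹) * C := by
          apply mul_le_mul (rpl_norm_Phi_le hm (hS s hs)) _ (norm_nonneg _) (by positivity)
          rw [Complex.norm_real, Real.norm_eq_abs]; exact hgC s
      _ = (K * C) * (1+s^2)⁻¹ := by ring

lemma rpl_diffAt {S : Set ℝ} (hSm : MeasurableSet S) (hSc : IsClosed (Complex.ofReal '' S))
    (hSne : S.Nonempty) {g : ℝ → ℝ} (hg : Measurable g) {C : ℝ} (hgC : ∀ s, |g s| ≤ C)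
    {z₀ : ℂ} (hz : z₀ ∉ Complex.ofReal '' S) :
    DifferentiableAt ℂ (fun z => ∫ s in S, rplPhi z s * ((g s : ℝ):ℂ)) z₀ := by
  have hC0 : 0 ≤ C := le_trans (abs_nonneg _) (hgC 0)
  set m : ℝ := Metric.infDist z₀ (Complex.ofReal '' S) with hmdef
  have hm : 0 < m := (hSc.notMem_iff_infDist_pos (hSne.image _)).1 hz
  have hdist : ∀ z ∈ Metric.ball z₀ (m/2), ∀ s ∈ S, m/2 ≤ ‖(s:ℂ) - z‖ := by
    intro z hzb s hsS
    have h1 : m ≤ dist z₀ ((s:ℂ)) :=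
      Metric.infDist_le_dist_of_mem (Set.mem_image_of_mem _ hsS)
    have h2 : dist z₀ ((s:ℂ)) ≤ dist z₀ z + dist z ((s:ℂ)) := dist_triangle _ _ _
    have h3 : dist z₀ z < m/2 := by rw [dist_comm]; exact hzb
    have h4 : dist z ((s:ℂ)) = ‖(s:ℂ) - z‖ := by
      rw [dist_comm, Complex.dist_eq]
    linarith
  set c : ℝ := ‖z₀‖ + m/2 with hcdef
  have key := hasDerivAt_integral_of_dominated_loc_of_deriv_le
    (μ := volume.restrict S) (x₀ := z₀)
    (F := fun z s => rplPhi z s * ((g s : ℝ):ℂ))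
    (F' := fun z s => (((s:ℂ) - z)^2)⁻¹ * ((g s : ℝ):ℂ))
    (bound := fun s => (((1 + (2*c+1)^2)/(m/2)^2 + 8) * C) * (1+s^2)⁻¹)
    (Metric.ball_mem_nhds z₀ (half_pos hm))
    (Filter.Eventually.of_forall fun z => ((rpl_meas hg z).aestronglyMeasurable).restrict)
    (rpl_integrableOn (half_pos hm) hSm
      (hdist z₀ (Metric.mem_ball_self (half_pos hm))) hg hgC)
    ?_ ?_ ?_ ?_
  · exact key.2.differentiableAt
  · apply Measurable.aestronglyMeasurable
    apply Measurable.mul _ (Complex.measurable_ofReal.comp hg)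
    fun_prop
  · rw [ae_restrict_iff' hSm]
    refine ae_of_all _ fun s hs => fun z hzb => ?_
    rw [norm_mul]
    have hzc : ‖z‖ ≤ c := by
      have h1 : ‖z‖ - ‖z₀‖ ≤ ‖z - z₀‖ := by
        have := norm_sub_norm_le z z₀
        simpa using this
      have h2 : ‖z - z₀‖ < m/2 := by
        rw [← Complex.dist_eq]; exact hzb
      rw [hcdef]; linarith
    calc ‖(((s:ℂ) - z)^2)⁻¹‖ * ‖((g s : ℝ):ℂ)‖
        ≤ (((1 + (2*c+1)^2)/(m/2)^2 + 8) * (1+s^2)⁻¹) * C := by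
          apply mul_le_mul (rpl_norm_deriv_le (half_pos hm) hzc (hdist z hzb s hs)) _
            (norm_nonneg _) (by positivity)
          rw [Complex.norm_real, Real.norm_eq_abs]; exact hgC s
      _ = (((1 + (2*c+1)^2)/(m/2)^2 + 8) * C) * (1+s^2)⁻¹ := by ring
  · exact (integrable_inv_one_add_sq.const_mul _).restrict
  · rw [ae_restrict_iff' hSm]
    refine ae_of_all _ fun s hs => fun z hzb => ?_
    have hnz : ((s:ℂ) - z) ≠ 0 := by
      intro h
      have := hdist z hzb s hs
      rw [h] at this; simp at this; linarith
    have h1 : HasDerivAt (fun z : ℂ => ((s:ℂ) - z)) (-1) z := (hasDerivAt_id z).const_sub _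
    have h2 := (h1.inv hnz).sub_const ((s:ℂ) / ((s:ℂ)^2 + 1))
    have h3 := h2.mul_const (((g s : ℝ)):ℂ)
    refine h3.congr_deriv ?_
    rw [neg_neg, one_div]

lemma rpl_analyticOnNhd {S : Set ℝ} (hSm : MeasurableSet S) (hSc : IsClosed (Complex.ofReal '' S))
    (hSne : S.Nonempty) {g : ℝ → ℝ} (hg : Measurable g) {C : ℝ} (hgC : ∀ s, |g s| ≤ C) :
    AnalyticOnNhd ℂ (fun z => ∫ s in S, rplPhi z s * ((g s : ℝ):ℂ)) ((Complex.ofReal '' S)ᶜ) :=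
  DifferentiableOn.analyticOnNhd
    (fun z hz => (rpl_diffAt hSm hSc hSne hg hgC hz).differentiableWithinAt)
    hSc.isOpen_compl

lemma rpl_im_Phi_mul {ζ : ℂ} (hζ : ζ.im ≠ 0) (s : ℝ) (x : ℝ) :
    (rplPhi ζ s * ((x:ℝ):ℂ)).im = ζ.im / ((ζ.re - s)^2 + ζ.im^2) * x := by
  have hPhi : rplPhi ζ s = ((s:ℂ) - ζ)⁻¹ - ((s/(s^2+1) : ℝ) : ℂ) := by
    unfold rplPhi; push_cast; ring
  have hns : Complex.normSq ((s:ℂ) - ζ) = (ζ.re - s)^2 + ζ.im^2 := by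
    rw [Complex.normSq_apply]
    simp [Complex.sub_re, Complex.sub_im]
    ring
  rw [hPhi, Complex.mul_im]
  simp only [Complex.ofReal_im, Complex.ofReal_re, Complex.sub_im, Complex.inv_im, hns,
    Complex.sub_im, Complex.ofReal_im, mul_zero, add_zero]
  ring

lemma rpl_arg_mem {w : ℂ} (hw : 0 < w.im) : Complex.arg w ∈ Set.Ioo 0 π := by
  have hw0 : w ≠ 0 := by
    intro h; rw [h] at hw; simp at hw
  have hsin : 0 < Real.sin (Complex.arg w) := by
    rw [Complex.sin_arg]
    exact div_pos hw (norm_pos_iff.mpr hw0)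
  constructor
  · by_contra h
    push_neg at h
    have := Real.sin_nonpos_of_nonpos_of_neg_pi_le h (le_of_lt (Complex.neg_pi_lt_arg w))
    linarith
  · rcases lt_or_eq_of_le (Complex.arg_le_pi w) with h | h
    · exact h
    · exfalso
      rw [Complex.arg_eq_pi_iff] at h
      exact hw.ne' h.2

lemma rpl_arctan_eq_arg {w : ℂ} (hw : 0 < w.im) :
    Real.arctan (-w.re/w.im) = Complex.arg w - π/2 := by
  have hmem := rpl_arg_mem hw
  have hw0 : w ≠ 0 := by intro h; rw [h] at hw; simp at hw
  have hsin : Real.sin (Complex.arg w) = w.im / ‖w‖ := Complex.sin_arg w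
  have hcos : Real.cos (Complex.arg w) = w.re / ‖w‖ := Complex.cos_arg hw0
  have hsinpos : 0 < Real.sin (Complex.arg w) := by
    rw [hsin]; exact div_pos hw (norm_pos_iff.mpr hw0)
  have htan : Real.tan (Complex.arg w - π/2) = -w.re/w.im := by
    rw [Real.tan_eq_sin_div_cos, Real.sin_sub_pi_div_two, Real.cos_sub_pi_div_two, hsin, hcos]
    have habs : ‖w‖ ≠ 0 := norm_ne_zero_iff.mpr hw0
    field_simp
  rw [← htan, Real.arctan_tan]
  · linarith [hmem.1]
  · linarith [hmem.2]

lemma rpl_integral_ker {ζ : ℂ} (hζ : 0 < ζ.im) {u v : ℝ} (huv : u ≤ v) :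
    ∫ s in Set.Ioo u v, ζ.im/((ζ.re - s)^2 + ζ.im^2)
      = Real.arctan ((v - ζ.re)/ζ.im) - Real.arctan ((u - ζ.re)/ζ.im) := by
  rw [← integral_Ioc_eq_integral_Ioo, ← intervalIntegral.integral_of_le huv]
  have hd : ∀ x ∈ Set.uIcc u v,
      HasDerivAt (fun s => Real.arctan ((s - ζ.re)/ζ.im)) (ζ.im/((ζ.re - x)^2 + ζ.im^2)) x := by
    intro x _
    have h1 : HasDerivAt (fun s : ℝ => (s - ζ.re)/ζ.im) (1/ζ.im) x := by
      simpa using ((hasDerivAt_id x).sub_const ζ.re).div_const ζ.im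
    have h2 := (Real.hasDerivAt_arctan ((x - ζ.re)/ζ.im)).comp x h1
    refine h2.congr_deriv ?_
    have hne : ζ.im ≠ 0 := hζ.ne'
    field_simp
    ring
  apply intervalIntegral.integral_eq_sub_of_hasDerivAt hd
  apply Continuous.intervalIntegrable
  apply continuous_const.div
  · continuity
  · intro x
    positivity

lemma rpl_e_im (r θ : ℝ) : ((r:ℂ) * Complex.exp ((θ:ℂ) * Complex.I)).im = r * Real.sin θ := by
  simp [Complex.mul_im, Complex.exp_ofReal_mul_I_im, Complex.exp_ofReal_mul_I_re]

lemma rpl_e_re (r θ : ℝ) : ((r:ℂ) * Complex.exp ((θ:ℂ) * Complex.I)).re = r * Real.cos θ := by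
  simp [Complex.mul_re, Complex.exp_ofReal_mul_I_im, Complex.exp_ofReal_mul_I_re]

lemma rpl_arg_e {r θ : ℝ} (hr : 0 < r) (hθ : θ ∈ Set.Ioo 0 π) :
    Complex.arg ((r:ℂ) * Complex.exp ((θ:ℂ) * Complex.I)) = θ := by
  rw [Complex.exp_mul_I, Complex.arg_real_mul _ hr,
    Complex.arg_cos_add_sin_mul_I ⟨by linarith [hθ.1, Real.pi_pos], le_of_lt hθ.2⟩]

lemma rpl_e_neg (r θ : ℝ) :
    (((-r : ℝ):ℂ)) * Complex.exp ((((π - θ : ℝ)):ℂ) * Complex.I)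
      = (starRingEnd ℂ) ((r:ℂ) * Complex.exp ((θ:ℂ) * Complex.I)) := by
  rw [map_mul, Complex.conj_ofReal, ← Complex.exp_conj, map_mul, Complex.conj_ofReal,
    Complex.conj_I]
  push_cast
  rw [show ((π:ℂ) - θ)*Complex.I = π*Complex.I + θ*(-Complex.I) by ring, Complex.exp_add,
    Complex.exp_pi_mul_I]
  ring

/-- Reflection principle for lightlike lines (analytic form): a bounded measurable
boundary map which is constantly `a` on `(σ, 0)` and constantly `b` on `(0, τ)`
produces a Poisson integral that extends real analytically across the jump point,
with point symmetry about the midpoint `(a+b)/2`. -/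
theorem reflection_principle_lightlike (σ τ : ℝ) (hσ : σ < 0) (hτ : 0 < τ)
    (a b : Fin 3 → ℝ) (X : ℝ → Fin 3 → ℝ)
    (hXmeas : Measurable X) (hXbdd : ∃ C : ℝ, ∀ s : ℝ, ‖X s‖ ≤ C)
    (hXa : ∀ᵐ s ∂(MeasureTheory.volume.restrict (Set.Ioo σ 0)), X s = a)
    (hXb : ∀ᵐ s ∂(MeasureTheory.volume.restrict (Set.Ioo 0 τ)), X s = b) :
    ∃ F : ℝ × ℝ → Fin 3 → ℝ,
      AnalyticOnNhd ℝ F (Set.univ ×ˢ Set.Ioo 0 Real.pi) ∧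
      (∀ r : ℝ, 0 < r → ∀ θ ∈ Set.Ioo 0 Real.pi,
        F (r, θ) =
          fun i => poisson (fun s => X s i) ((r : ℂ) * Complex.exp (θ * Complex.I))) ∧
      (∀ r : ℝ, ∀ θ ∈ Set.Ioo 0 Real.pi,
        F (-r, Real.pi - θ) + F (r, θ) = a + b) ∧
      (∀ θ ∈ Set.Ioo 0 Real.pi,
        F (0, θ) = (θ / Real.pi) • a + (1 - θ / Real.pi) • b) := by
  obtain ⟨C, hC⟩ := hXbdd
  have hπ : (0:ℝ) < π := Real.pi_pos
  have hCi : ∀ i, ∀ s : ℝ, |X s i| ≤ C := by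
    intro i s
    calc |X s i| = ‖X s i‖ := (Real.norm_eq_abs _).symm
    _ ≤ ‖X s‖ := norm_le_pi_norm (X s) i
    _ ≤ C := hC s
  have hXi : ∀ i, Measurable (fun s => X s i) := fun i => (measurable_pi_apply i).comp hXmeas
  set E : Set ℝ := (Set.Ioo σ τ)ᶜ with hE
  have hEm : MeasurableSet E := measurableSet_Ioo.compl
  have hEc : IsClosed (Complex.ofReal '' E) :=
    (Complex.isUniformEmbedding_ofReal.isClosedEmbedding.isClosedMap _ isOpen_Ioo.isClosed_compl)
  have hEne : E.Nonempty := ⟨σ - 1, by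
    simp only [hE, Set.mem_compl_iff, Set.mem_Ioo, not_and, not_lt]
    intro h; linarith⟩
  set e : ℝ × ℝ → ℂ := fun p => ((p.1:ℂ)) * Complex.exp ((p.2:ℂ) * Complex.I) with he
  set H : (Fin 3) → ℂ → ℂ := fun i z => ∫ s in E, rplPhi z s * ((X s i : ℝ):ℂ) with hHdef
  set F : ℝ × ℝ → Fin 3 → ℝ := fun p i =>
    (p.2 - Complex.arg (e p - (σ:ℂ))) * π⁻¹ * a i
    + (π - p.2 + Complex.arg ((τ:ℂ) - e p)) * π⁻¹ * b i
    + (H i (e p)).im * π⁻¹ with hF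
  -- basic geometry of e
  have hslitσ : ∀ p : ℝ × ℝ, p.2 ∈ Set.Ioo 0 π → (e p - (σ:ℂ)) ∈ Complex.slitPlane := by
    intro p hp
    rw [Complex.mem_slitPlane_iff]
    rcases eq_or_ne p.1 0 with h0 | h0
    · left
      simp only [he, Complex.sub_re, Complex.ofReal_re, rpl_e_re, h0, zero_mul]
      linarith
    · right
      simp only [he, Complex.sub_im, Complex.ofReal_im, rpl_e_im, sub_zero]
      exact mul_ne_zero h0 (Real.sin_pos_of_pos_of_lt_pi hp.1 hp.2).ne'
  have hslitτ : ∀ p : ℝ × ℝ, p.2 ∈ Set.Ioo 0 π → ((τ:ℂ) - e p) ∈ Complex.slitPlane := by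
    intro p hp
    rw [Complex.mem_slitPlane_iff]
    rcases eq_or_ne p.1 0 with h0 | h0
    · left
      simp only [he, Complex.sub_re, Complex.ofReal_re, rpl_e_re, h0, zero_mul]
      linarith
    · right
      simp only [he, Complex.sub_im, Complex.ofReal_im, rpl_e_im, zero_sub]
      exact neg_ne_zero.2 (mul_ne_zero h0 (Real.sin_pos_of_pos_of_lt_pi hp.1 hp.2).ne')
  have hmemU : ∀ p : ℝ × ℝ, p.2 ∈ Set.Ioo 0 π → e p ∈ (Complex.ofReal '' E)ᶜ := by
    intro p hp hmem
    obtain ⟨s, hsE, hs⟩ := hmem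
    have him : (e p).im = p.1 * Real.sin p.2 := rpl_e_im _ _
    have h0 : p.1 = 0 := by
      have h1 : ((s:ℂ)).im = 0 := Complex.ofReal_im s
      rw [hs, him] at h1
      rcases mul_eq_zero.1 h1 with h | h
      · exact h
      · exact absurd h (Real.sin_pos_of_pos_of_lt_pi hp.1 hp.2).ne'
    have h2 : e p = 0 := by simp [he, h0]
    rw [h2] at hs
    have : s = 0 := by exact_mod_cast hs
    rw [this] at hsE
    exact hsE ⟨hσ, hτ⟩
  refine ⟨F, ?_, ?_, ?_, ?_⟩
  · -- analyticity
    intro p hp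
    have hθ : p.2 ∈ Set.Ioo 0 π := hp.2
    apply AnalyticAt.pi
    intro i
    have hsnd : AnalyticAt ℝ (fun p : ℝ×ℝ => p.2) p := (ContinuousLinearMap.snd ℝ ℝ ℝ).analyticAt p
    have hofr1 : AnalyticAt ℝ (fun p : ℝ×ℝ => ((p.1:ℝ):ℂ)) p :=
      (Complex.ofRealCLM.comp (ContinuousLinearMap.fst ℝ ℝ ℝ)).analyticAt p
    have hofr2 : AnalyticAt ℝ (fun p : ℝ×ℝ => ((p.2:ℝ):ℂ)) p :=
      (Complex.ofRealCLM.comp (ContinuousLinearMap.snd ℝ ℝ ℝ)).analyticAt p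
    have hmulI : AnalyticAt ℝ (fun p : ℝ×ℝ => ((p.2:ℝ):ℂ) * Complex.I) p :=
      hofr2.mul analyticAt_const
    have hexp : AnalyticAt ℝ (fun p : ℝ×ℝ => Complex.exp ((p.2:ℂ) * Complex.I)) p :=
      AnalyticAt.comp (g := Complex.exp) (f := fun p : ℝ×ℝ => ((p.2:ℝ):ℂ) * Complex.I)
        (analyticAt_cexp.restrictScalars) hmulI
    have he_an : AnalyticAt ℝ e p := hofr1.mul hexp
    have harg : ∀ w ∈ Complex.slitPlane, AnalyticAt ℝ Complex.arg w := by
      intro w hw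
      have hfn : Complex.arg = fun z => (Complex.log z).im :=
        funext fun z => (Complex.log_im z).symm
      rw [hfn]
      exact (Complex.imCLM.analyticAt _).comp ((analyticAt_clog hw).restrictScalars)
    have hsub1 : AnalyticAt ℝ (fun q : ℝ×ℝ => e q - (σ:ℂ)) p := he_an.sub analyticAt_const
    have hsub2 : AnalyticAt ℝ (fun q : ℝ×ℝ => (τ:ℂ) - e q) p := analyticAt_const.sub he_an
    have h1 : AnalyticAt ℝ (fun p => Complex.arg (e p - (σ:ℂ))) p :=
      AnalyticAt.comp (g := Complex.arg) (f := fun q : ℝ×ℝ => e q - (σ:ℂ))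
        (harg _ (hslitσ p hθ)) hsub1
    have h2 : AnalyticAt ℝ (fun p => Complex.arg ((τ:ℂ) - e p)) p :=
      AnalyticAt.comp (g := Complex.arg) (f := fun q : ℝ×ℝ => (τ:ℂ) - e q)
        (harg _ (hslitτ p hθ)) hsub2
    have hHan : AnalyticAt ℝ (H i) (e p) := by
      rw [hHdef]
      exact ((rpl_analyticOnNhd hEm hEc hEne (hXi i) (hCi i) (e p) (hmemU p hθ)).restrictScalars)
    have h3 : AnalyticAt ℝ (fun p => (H i (e p)).im) p :=
      AnalyticAt.comp (g := fun z : ℂ => z.im) (f := fun q : ℝ×ℝ => H i (e q))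
        (Complex.imCLM.analyticAt _)
        (AnalyticAt.comp (g := H i) (f := e) hHan he_an)
    exact ((((hsnd.sub h1).mul analyticAt_const).mul analyticAt_const).add
      ((((analyticAt_const.sub hsnd).add h2).mul analyticAt_const).mul analyticAt_const)).add
      (h3.mul analyticAt_const)
  · -- Poisson identity for r > 0
    intro r hr θ hθ
    funext i
    simp only [hF, he]
    set ζ : ℂ := ((r:ℂ)) * Complex.exp ((θ:ℂ) * Complex.I) with hζ
    have hζim : ζ.im = r * Real.sin θ := rpl_e_im r θ
    have hζimpos : 0 < ζ.im := by
      rw [hζim]; exact mul_pos hr (Real.sin_pos_of_pos_of_lt_pi hθ.1 hθ.2)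
    have hmle : ∀ s : ℝ, ζ.im ≤ ‖(s:ℂ) - ζ‖ := by
      intro s
      have h1 := Complex.abs_im_le_norm ((s:ℂ) - ζ)
      rw [Complex.sub_im, Complex.ofReal_im, zero_sub, abs_neg, abs_of_pos hζimpos] at h1
      exact h1
    have hPhiInt : Integrable (fun s => rplPhi ζ s * ((X s i : ℝ):ℂ)) := by
      have h := rpl_integrableOn (S := Set.univ) hζimpos MeasurableSet.univ
        (fun s _ => hmle s) (hXi i) (hCi i)
      rwa [integrableOn_univ] at h
    have hker_eq : ∀ s : ℝ, ζ.im/((ζ.re - s)^2 + ζ.im^2) * X s i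
        = (rplPhi ζ s * ((X s i : ℝ):ℂ)).im :=
      fun s => (rpl_im_Phi_mul hζimpos.ne' s (X s i)).symm
    have hint : Integrable (fun s : ℝ => ζ.im/((ζ.re - s)^2 + ζ.im^2) * X s i) := by
      rw [show (fun s : ℝ => ζ.im/((ζ.re - s)^2 + ζ.im^2) * X s i)
          = fun s => (rplPhi ζ s * ((X s i : ℝ):ℂ)).im from funext hker_eq]
      exact hPhiInt.im
    have hdisj : Disjoint (Set.Ioc σ 0) (Set.Ioo 0 τ) := by
      rw [Set.disjoint_left]
      rintro x ⟨_, h2⟩ ⟨h3, _⟩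
      linarith
    have hseteq : Set.Ioo σ τ = Set.Ioc σ 0 ∪ Set.Ioo 0 τ := by
      ext x
      simp only [Set.mem_Ioo, Set.mem_Ioc, Set.mem_union]
      constructor
      · rintro ⟨h1, h2⟩
        rcases le_or_gt x 0 with h | h
        · exact Or.inl ⟨h1, h⟩
        · exact Or.inr ⟨h, h2⟩
      · rintro (⟨h1, h2⟩ | ⟨h1, h2⟩) <;> constructor <;> linarith
    have hsplit : ∫ s : ℝ, ζ.im/((ζ.re - s)^2 + ζ.im^2) * X s i
        = ((∫ s in Set.Ioo σ 0, ζ.im/((ζ.re - s)^2 + ζ.im^2) * X s i)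
        + (∫ s in Set.Ioo 0 τ, ζ.im/((ζ.re - s)^2 + ζ.im^2) * X s i))
        + (∫ s in E, ζ.im/((ζ.re - s)^2 + ζ.im^2) * X s i) := by
      rw [← integral_add_compl (measurableSet_Ioo (a := σ) (b := τ)) hint, ← hE]
      congr 1
      rw [hseteq, setIntegral_union hdisj measurableSet_Ioo
        (hint.integrableOn) (hint.integrableOn), integral_Ioc_eq_integral_Ioo]
    have hIooa : ∫ s in Set.Ioo σ 0, ζ.im/((ζ.re - s)^2 + ζ.im^2) * X s i
        = (Real.arctan ((0 - ζ.re)/ζ.im) - Real.arctan ((σ - ζ.re)/ζ.im)) * a i := by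
      rw [show (∫ s in Set.Ioo σ 0, ζ.im/((ζ.re - s)^2 + ζ.im^2) * X s i)
          = ∫ s in Set.Ioo σ 0, ζ.im/((ζ.re - s)^2 + ζ.im^2) * a i from
        integral_congr_ae (by filter_upwards [hXa] with s hs; rw [hs])]
      rw [integral_mul_const, rpl_integral_ker hζimpos (le_of_lt hσ)]
    have hIoob : ∫ s in Set.Ioo 0 τ, ζ.im/((ζ.re - s)^2 + ζ.im^2) * X s i
        = (Real.arctan ((τ - ζ.re)/ζ.im) - Real.arctan ((0 - ζ.re)/ζ.im)) * b i := by
      rw [show (∫ s in Set.Ioo 0 τ, ζ.im/((ζ.re - s)^2 + ζ.im^2) * X s i)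
          = ∫ s in Set.Ioo 0 τ, ζ.im/((ζ.re - s)^2 + ζ.im^2) * b i from
        integral_congr_ae (by filter_upwards [hXb] with s hs; rw [hs])]
      rw [integral_mul_const, rpl_integral_ker hζimpos (le_of_lt hτ)]
    have hIooE : ∫ s in E, ζ.im/((ζ.re - s)^2 + ζ.im^2) * X s i = (H i ζ).im := by
      calc ∫ s in E, ζ.im/((ζ.re - s)^2 + ζ.im^2) * X s i
          = ∫ s in E, (rplPhi ζ s * ((X s i : ℝ):ℂ)).im :=
            integral_congr_ae (ae_of_all _ fun s => hker_eq s)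
        _ = (∫ s in E, rplPhi ζ s * ((X s i : ℝ):ℂ)).im := integral_im hPhiInt.restrict
        _ = (H i ζ).im := by rw [hHdef]
    have hargζ : Complex.arg ζ = θ := rpl_arg_e hr hθ
    have h1 : Real.arctan ((0 - ζ.re)/ζ.im) = θ - π/2 := by
      rw [show (0 - ζ.re)/ζ.im = -ζ.re/ζ.im by ring, rpl_arctan_eq_arg hζimpos, hargζ]
    have h2 : Real.arctan ((σ - ζ.re)/ζ.im) = Complex.arg (ζ - (σ:ℂ)) - π/2 := by
      have hw : (0:ℝ) < (ζ - (σ:ℂ)).im := by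
        rw [Complex.sub_im, Complex.ofReal_im, sub_zero]; exact hζimpos
      have h4 := rpl_arctan_eq_arg hw
      rw [Complex.sub_re, Complex.sub_im, Complex.ofReal_re, Complex.ofReal_im, sub_zero] at h4
      rw [show (σ - ζ.re)/ζ.im = -(ζ.re - σ)/ζ.im by ring, h4]
    have h3 : Real.arctan ((τ - ζ.re)/ζ.im) = (Complex.arg ((τ:ℂ) - ζ) + π) - π/2 := by
      have hw : (0:ℝ) < (ζ - (τ:ℂ)).im := by
        rw [Complex.sub_im, Complex.ofReal_im, sub_zero]; exact hζimpos
      have h4 := rpl_arctan_eq_arg hw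
      rw [Complex.sub_re, Complex.sub_im, Complex.ofReal_re, Complex.ofReal_im, sub_zero] at h4
      have h5 : Complex.arg (ζ - (τ:ℂ)) = Complex.arg ((τ:ℂ) - ζ) + π := by
        rw [show ζ - (τ:ℂ) = -((τ:ℂ) - ζ) by ring]
        apply Complex.arg_neg_eq_arg_add_pi_of_im_neg
        rw [Complex.sub_im, Complex.ofReal_im, zero_sub]
        exact neg_lt_zero.2 hζimpos
      rw [show (τ - ζ.re)/ζ.im = -(ζ.re - τ)/ζ.im by ring, h4, h5]
    have hπne : (π:ℝ) ≠ 0 := ne_of_gt hπ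
    simp only [poisson]
    rw [hsplit, hIooa, hIoob, hIooE, h1, h2, h3]
    ring
  · -- point symmetry
    intro r θ hθ
    funext i
    simp only [Pi.add_apply, hF, he]
    set w : ℂ := ((r:ℂ)) * Complex.exp ((θ:ℂ) * Complex.I) with hw
    have hconj : ((-r : ℝ):ℂ) * Complex.exp ((((π - θ : ℝ)):ℂ) * Complex.I) = (starRingEnd ℂ) w :=
      rpl_e_neg r θ
    rw [hconj]
    have hargσ_ne : Complex.arg (w - (σ:ℂ)) ≠ π := by
      have := hslitσ (r, θ) hθ
      simp only [he] at this
      exact (Complex.mem_slitPlane_iff_arg.1 this).1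
    have hargτ_ne : Complex.arg ((τ:ℂ) - w) ≠ π := by
      have := hslitτ (r, θ) hθ
      simp only [he] at this
      exact (Complex.mem_slitPlane_iff_arg.1 this).1
    have hc1 : (starRingEnd ℂ) w - (σ:ℂ) = (starRingEnd ℂ) (w - (σ:ℂ)) := by
      rw [map_sub, Complex.conj_ofReal]
    have hc2 : (τ:ℂ) - (starRingEnd ℂ) w = (starRingEnd ℂ) ((τ:ℂ) - w) := by
      rw [map_sub, Complex.conj_ofReal]
    have ha1 : Complex.arg ((starRingEnd ℂ) w - (σ:ℂ)) = -Complex.arg (w - (σ:ℂ)) := by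
      rw [hc1, Complex.arg_conj, if_neg hargσ_ne]
    have ha2 : Complex.arg ((τ:ℂ) - (starRingEnd ℂ) w) = -Complex.arg ((τ:ℂ) - w) := by
      rw [hc2, Complex.arg_conj, if_neg hargτ_ne]
    have hHconj : H i ((starRingEnd ℂ) w) = (starRingEnd ℂ) (H i w) := by
      rw [hHdef]
      simp only
      rw [← integral_conj]
      apply integral_congr_ae
      refine ae_of_all _ fun s => ?_
      simp only [rplPhi, map_mul, map_sub, map_inv₀, map_div₀, map_add, map_pow, map_one,
        Complex.conj_ofReal]
    rw [ha1, ha2, hHconj, Complex.conj_im]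
    have hπne : (π:ℝ) ≠ 0 := ne_of_gt hπ
    field_simp
    ring
  · -- value on the segment
    intro θ hθ
    funext i
    simp only [hF, he, Pi.add_apply, Pi.smul_apply, smul_eq_mul]
    have he0 : ((0:ℝ):ℂ) * Complex.exp ((θ:ℂ) * Complex.I) = 0 := by
      simp
    rw [he0]
    have h1 : Complex.arg (0 - (σ:ℂ)) = 0 := by
      rw [show (0:ℂ) - (σ:ℂ) = (((-σ : ℝ)):ℂ) by push_cast; ring]
      exact Complex.arg_ofReal_of_nonneg (by linarith)
    have h2 : Complex.arg ((τ:ℂ) - 0) = 0 := by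
      rw [sub_zero]
      exact Complex.arg_ofReal_of_nonneg (le_of_lt hτ)
    have h3 : (H i 0).im = 0 := by
      rw [hHdef]
      simp only
      have hm0 : 0 < min (-σ) τ := lt_min (by linarith) hτ
      have hdist0 : ∀ s ∈ E, min (-σ) τ ≤ ‖(s:ℂ) - 0‖ := by
        intro s hsE
        rw [sub_zero, Complex.norm_real, Real.norm_eq_abs]
        rw [hE, Set.mem_compl_iff, Set.mem_Ioo, not_and_or, not_lt, not_lt] at hsE
        rcases hsE with h | h
        · calc min (-σ) τ ≤ -σ := min_le_left _ _
          _ ≤ |s| := by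
              rw [abs_of_nonpos (by linarith : s ≤ 0)]
              linarith
        · calc min (-σ) τ ≤ τ := min_le_right _ _
          _ ≤ |s| := le_trans h (le_abs_self s)
      have hPhiInt0 := rpl_integrableOn hm0 hEm hdist0 (hXi i) (hCi i)
      have hzero : ∀ s : ℝ, (rplPhi 0 s * ((X s i : ℝ):ℂ)).im = 0 := by
        intro s
        rw [show rplPhi 0 s = (((s⁻¹ - s/(s^2+1)) : ℝ):ℂ) from by unfold rplPhi; push_cast; ring,
          ← Complex.ofReal_mul, Complex.ofReal_im]
      calc (∫ s in E, rplPhi 0 s * ((X s i : ℝ):ℂ)).im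
          = ∫ s in E, (rplPhi 0 s * ((X s i : ℝ):ℂ)).im := (integral_im hPhiInt0).symm
        _ = 0 := by simp only [hzero]; exact integral_zero _ _
    rw [h1, h2, h3]
    have hπne : (π:ℝ) ≠ 0 := ne_of_gt hπ
    field_simp
    ring
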